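/- If sequences a and b both satisfy homogeneous linear recurrences with constant coefficients of orders p and q respectively, then their pointwise product n ↦ a(n)·b(n) satisfies a homogeneous linear recurrence with constant coefficients of order at most p·q. -/

import Mathlib

/-- `a` satisfies a homogeneous linear recurrence with constant coefficients of order `L`. -/
def SatisfiesLinRec (a : ℕ → ℚ) (L : ℕ) : Prop :=
  ∃ c : Fin L → ℚ, ∀ n : ℕ, a (n + L) = ∑ i : Fin L, c i * a (n + i)

/-- A one-step shift matrix for a linear recurrence. -/
lemma step_matrix (a : ℕ → ℚ) (p : ℕ) (ha : SatisfiesLinRec a p) :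
    ∃ A : Matrix (Fin p) (Fin p) ℚ,
      ∀ (n : ℕ) (i : Fin p), a (n + 1 + i) = ∑ i', A i i' * a (n + i') := by
  obtain ⟨c, hc⟩ := ha
  refine ⟨fun i i' => if (i : ℕ) + 1 < p then (if (i' : ℕ) = (i : ℕ) + 1 then 1 else 0)
      else c i', ?_⟩
  intro n i
  by_cases h : (i : ℕ) + 1 < p
  · simp only [if_pos h]
    rw [Finset.sum_eq_single (⟨(i : ℕ) + 1, h⟩ : Fin p)]
    · simp only [if_true, one_mul]
      congr 1
      omega
    · intro x _ hx
      rw [if_neg, zero_mul]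
      intro hxi
      exact hx (Fin.ext hxi)
    · intro hmem
      exact absurd (Finset.mem_univ _) hmem
  · simp only [if_neg h]
    have hip : (i : ℕ) + 1 = p := by
      have := i.isLt
      omega
    have : n + 1 + (i : ℕ) = n + p := by omega
    rw [this, hc n]

lemma sum_mulVec {n : Type*} [Fintype n] {ι : Type*} (s : Finset ι)
    (f : ι → Matrix n n ℚ) (x : n → ℚ) :
    (∑ i ∈ s, f i).mulVec x = ∑ i ∈ s, (f i).mulVec x := by
  classical
  induction s using Finset.induction with
  | empty => simp [Matrix.zero_mulVec]
  | insert _ _ h ih =>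
      rw [Finset.sum_insert h, Finset.sum_insert h, Matrix.add_mulVec, ih]

theorem cfinite_mul (a b : ℕ → ℚ) (p q : ℕ)
    (ha : SatisfiesLinRec a p) (hb : SatisfiesLinRec b q) :
    ∃ L ≤ p * q, SatisfiesLinRec (fun n => a n * b n) L := by
  rcases Nat.eq_zero_or_pos p with hp | hp
  · obtain ⟨c, hc⟩ := ha
    have haz : ∀ n, a n = 0 := by
      intro n
      have := hc n
      subst hp
      simpa using this
    exact ⟨0, Nat.zero_le _, ⟨Fin.elim0, fun n => by simp [haz]⟩⟩
  rcases Nat.eq_zero_or_pos q with hq | hq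
  · obtain ⟨c, hc⟩ := hb
    have hbz : ∀ n, b n = 0 := by
      intro n
      have := hc n
      subst hq
      simpa using this
    exact ⟨0, by simp, ⟨Fin.elim0, fun n => by simp [hbz]⟩⟩
  obtain ⟨A, hA⟩ := step_matrix a p ha
  obtain ⟨B, hB⟩ := step_matrix b q hb
  set M : Matrix (Fin p × Fin q) (Fin p × Fin q) ℚ :=
    fun ij kl => A ij.1 kl.1 * B ij.2 kl.2 with hM
  set v : ℕ → (Fin p × Fin q) → ℚ := fun n ij => a (n + ij.1) * b (n + ij.2) with hv
  -- one step
  have hstep : ∀ n, M.mulVec (v n) = v (n + 1) := by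
    intro n
    funext ij
    obtain ⟨i, j⟩ := ij
    show ∑ kl : Fin p × Fin q, M (i, j) kl * v n kl = a (n + 1 + i) * b (n + 1 + j)
    rw [hA n i, hB n j, Finset.sum_mul_sum, Fintype.sum_prod_type]
    apply Finset.sum_congr rfl
    intro i' _
    apply Finset.sum_congr rfl
    intro j' _
    simp only [hM, hv]
    ring
  -- k steps
  have hpow : ∀ (k n : ℕ), (M ^ k).mulVec (v n) = v (n + k) := by
    intro k
    induction k with
    | zero => intro n; simp [Matrix.one_mulVec]
    | succ k ih =>
        intro n
        rw [pow_succ', ← Matrix.mulVec_mulVec, ih n, hstep (n + k)]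
        rfl
  -- Cayley–Hamilton
  set χ := M.charpoly with hχ
  have hcard : Fintype.card (Fin p × Fin q) = p * q := by simp
  have hdeg : χ.natDegree = p * q := by rw [hχ, Matrix.charpoly_natDegree_eq_dim, hcard]
  have hCH : (Polynomial.aeval M) χ = 0 := Matrix.aeval_self_charpoly M
  rw [Polynomial.aeval_eq_sum_range, hdeg, Finset.sum_range_succ] at hCH
  have hlead : χ.coeff (p * q) = 1 := by
    have := (Matrix.charpoly_monic M).coeff_natDegree
    rwa [hdeg] at this
  rw [hlead, one_smul] at hCH
  have hMN : M ^ (p * q) = ∑ i ∈ Finset.range (p * q), (-(χ.coeff i)) • M ^ i := by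
    have := eq_neg_of_add_eq_zero_right hCH
    rw [this, ← Finset.sum_neg_distrib]
    apply Finset.sum_congr rfl
    intro i _
    rw [neg_smul]
  refine ⟨p * q, le_refl _, fun i => -(χ.coeff i), ?_⟩
  intro n
  have key : v (n + p * q) = ∑ i ∈ Finset.range (p * q), (-(χ.coeff i)) • v (n + i) := by
    rw [← hpow (p * q) n, hMN, sum_mulVec]
    apply Finset.sum_congr rfl
    intro i _
    rw [Matrix.smul_mulVec, hpow i n]
  have hzz : ∀ m, v m (⟨0, hp⟩, ⟨0, hq⟩) = a m * b m := by
    intro m; simp [hv]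
  have := congrFun key (⟨0, hp⟩, ⟨0, hq⟩)
  rw [hzz, Finset.sum_apply] at this
  simp only [Pi.smul_apply, smul_eq_mul] at this
  show a (n + p * q) * b (n + p * q) = _
  rw [this, ← Fin.sum_univ_eq_sum_range (fun i => -(χ.coeff i) * v (n + i) (⟨0, hp⟩, ⟨0, hq⟩))]
  apply Finset.sum_congr rfl
  intro i _
  rw [hzz]
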